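/- Let B̂ be a global minimizer of L₁ over ℝ^{p×q} and fix an index pair (j,k). Suppose β̂_jk ≠ 0 and every group g ∈ 𝒢 containing (j,k) satisfies ‖B̂_g‖₂ > 0. Then the stationarity equation (1/n) S_jk(B̂) = (1/n) ‖x_j‖₂² β̂_jk + λ₁ w_j sgn(β̂_jk) + Σ_{g ∈ 𝒢 : (j,k) ∈ g} λ_g v_g β̂_jk / ‖B̂_g‖₂ holds. -/

import Mathlib

open Finset

/-- stationarity (KKT) equation at a nonzero coordinate of a
global minimizer of the weighted sparse group lasso objective L₁ (Model 1),
when every group containing `(j,k)` has positive norm. -/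
theorem jointModel_stationarity_equation
    (n p q : ℕ) (hn : 0 < n) (hp : 0 < p) (hq : 0 < q)
    (X : Matrix (Fin n) (Fin p) ℝ) (Y : Matrix (Fin n) (Fin q) ℝ)
    (lam1 : ℝ) (hlam1 : 0 ≤ lam1)
    (w : Fin p → ℝ) (hw : ∀ j, 0 ≤ w j)
    (𝒢 : Finset (Finset (Fin p × Fin q)))
    (lamg vg : Finset (Fin p × Fin q) → ℝ)
    (hlamg : ∀ g ∈ 𝒢, 0 ≤ lamg g) (hvg : ∀ g ∈ 𝒢, 0 ≤ vg g)
    (L1 : Matrix (Fin p) (Fin q) ℝ → ℝ)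
    (hL1 : ∀ B, L1 B =
      (1 / (2 * (n : ℝ))) * ∑ i, ∑ k, (Y i k - ∑ j, X i j * B j k) ^ 2
      + ∑ j, ∑ k, lam1 * w j * |B j k|
      + ∑ g ∈ 𝒢, lamg g * vg g * Real.sqrt (∑ jk ∈ g, (B jk.1 jk.2) ^ 2))
    (S : Matrix (Fin p) (Fin q) ℝ → Fin p → Fin q → ℝ)
    (hS : ∀ B j k, S B j k =
      ∑ i, X i j * (Y i k - ∑ j', (if j' = j then 0 else X i j' * B j' k)))
    (Bhat : Matrix (Fin p) (Fin q) ℝ)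
    (hmin : ∀ B, L1 Bhat ≤ L1 B)
    (j : Fin p) (k : Fin q)
    (hjk : Bhat j k ≠ 0)
    (hgroups : ∀ g ∈ 𝒢, (j, k) ∈ g →
      0 < Real.sqrt (∑ jk ∈ g, (Bhat jk.1 jk.2) ^ 2)) :
    (1 / (n : ℝ)) * S Bhat j k =
      (1 / (n : ℝ)) * (∑ i, (X i j) ^ 2) * Bhat j k
      + lam1 * w j * Real.sign (Bhat j k)
      + ∑ g ∈ 𝒢.filter (fun g => (j, k) ∈ g),
          lamg g * vg g * Bhat j k
            / Real.sqrt (∑ jk ∈ g, (Bhat jk.1 jk.2) ^ 2) := by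
  classical
  set t0 : ℝ := Bhat j k with ht0
  set M : ℝ → Matrix (Fin p) (Fin q) ℝ :=
    fun t => Matrix.of fun j' k' => if j' = j ∧ k' = k then t else Bhat j' k' with hMdef
  have hMt0 : M t0 = Bhat := by
    funext j' k'
    simp only [hMdef, Matrix.of_apply]
    split
    · next h => rw [h.1, h.2]
    · rfl
  have hMd : ∀ j' k', HasDerivAt (fun t => M t j' k')
      (if j' = j ∧ k' = k then 1 else 0) t0 := by
    intro j' k'
    by_cases h : j' = j ∧ k' = k
    · simp only [hMdef, Matrix.of_apply, h, if_true]
      exact hasDerivAt_id t0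
    · simp only [hMdef, Matrix.of_apply, h, if_false]
      exact hasDerivAt_const _ _
  -- residual
  set r : Fin n → ℝ := fun i => Y i k - ∑ j', X i j' * Bhat j' k with hr
  -- Term A
  have hA : HasDerivAt
      (fun t => (1 / (2 * (n : ℝ))) * ∑ i, ∑ k', (Y i k' - ∑ j', X i j' * M t j' k') ^ 2)
      (-((1 / (n : ℝ)) * ∑ i, X i j * r i)) t0 := by
    have h1 : ∀ i k', HasDerivAt (fun t => (Y i k' - ∑ j', X i j' * M t j' k') ^ 2)
        (2 * (Y i k' - ∑ j', X i j' * Bhat j' k') *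
          (-(if k' = k then X i j else 0))) t0 := by
      intro i k'
      have hin : HasDerivAt (fun t => Y i k' - ∑ j', X i j' * M t j' k')
          (-(if k' = k then X i j else 0)) t0 := by
        have hs : HasDerivAt (fun t => ∑ j', X i j' * M t j' k')
            (∑ j', X i j' * (if j' = j ∧ k' = k then 1 else 0)) t0 :=
          HasDerivAt.fun_sum fun j' _ => (hMd j' k').const_mul (X i j')
        have : (∑ j', X i j' * (if j' = j ∧ k' = k then 1 else 0))
            = (if k' = k then X i j else 0) := by
          by_cases hk : k' = k
          · simp [hk, mul_ite]
          · simp [hk]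
        rw [this] at hs
        simpa using (hasDerivAt_const t0 (Y i k')).fun_sub hs
      have := hin.fun_pow 2
      simpa [hMt0, mul_comm, mul_assoc, mul_left_comm] using this
    have hsum : HasDerivAt
        (fun t => ∑ i, ∑ k', (Y i k' - ∑ j', X i j' * M t j' k') ^ 2)
        (∑ i, ∑ k', 2 * (Y i k' - ∑ j', X i j' * Bhat j' k') *
          (-(if k' = k then X i j else 0))) t0 :=
      HasDerivAt.fun_sum fun i _ => HasDerivAt.fun_sum fun k' _ => h1 i k'
    have := hsum.const_mul (1 / (2 * (n : ℝ)))
    refine this.congr_deriv (Eq.symm ?_)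
    have hnn : (n : ℝ) ≠ 0 := Nat.cast_ne_zero.mpr hn.ne'
    have hrow : ∀ i, ∑ k', 2 * (Y i k' - ∑ j', X i j' * Bhat j' k') *
        (-(if k' = k then X i j else 0)) = -(2 * (r i) * X i j) := by
      intro i
      rw [Finset.sum_eq_single k]
      · simp [hr]
      · intro b _ hb; simp [hb]
      · simp
    simp only [hrow]
    rw [neg_eq_iff_eq_neg, ← neg_mul, Finset.mul_sum, Finset.mul_sum]
    refine Finset.sum_congr rfl fun i _ => ?_
    field_simp
  -- Term B
  have hsign : HasDerivAt (fun t : ℝ => |t|) (Real.sign t0) t0 := by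
    rcases lt_or_gt_of_ne hjk with h | h
    · simpa [Real.sign_of_neg h] using hasDerivAt_abs_neg h
    · simpa [Real.sign_of_pos h] using hasDerivAt_abs_pos h
  have hB : HasDerivAt (fun t => ∑ j', ∑ k', lam1 * w j' * |M t j' k'|)
      (lam1 * w j * Real.sign t0) t0 := by
    have h1 : ∀ j' k', HasDerivAt (fun t => lam1 * w j' * |M t j' k'|)
        (if j' = j ∧ k' = k then lam1 * w j * Real.sign t0 else 0) t0 := by
      intro j' k'
      by_cases h : j' = j ∧ k' = k
      · obtain ⟨h1', h2'⟩ := h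
        subst h1'; subst h2'
        simp only [hMdef, Matrix.of_apply, and_self, if_true]
        exact hsign.const_mul (lam1 * w j')
      · simp only [hMdef, Matrix.of_apply, h, if_false]
        exact hasDerivAt_const _ _
    have hsum : HasDerivAt (fun t => ∑ j', ∑ k', lam1 * w j' * |M t j' k'|)
        (∑ j', ∑ k', if j' = j ∧ k' = k then lam1 * w j * Real.sign t0 else 0) t0 :=
      HasDerivAt.fun_sum fun j' _ => HasDerivAt.fun_sum fun k' _ => h1 j' k'
    convert hsum using 1
    rw [Finset.sum_eq_single j]
    · rw [Finset.sum_eq_single k]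
      · simp
      · intro b _ hb; simp [hb]
      · simp
    · intro b _ hb
      rw [Finset.sum_eq_zero]
      intro k' _
      simp [hb]
    · simp
  -- Term C
  have hC : HasDerivAt
      (fun t => ∑ g ∈ 𝒢, lamg g * vg g * Real.sqrt (∑ jk ∈ g, (M t jk.1 jk.2) ^ 2))
      (∑ g ∈ 𝒢.filter (fun g => (j, k) ∈ g),
        lamg g * vg g * t0 / Real.sqrt (∑ jk ∈ g, (Bhat jk.1 jk.2) ^ 2)) t0 := by
    have h1 : ∀ g ∈ 𝒢, HasDerivAt
        (fun t => lamg g * vg g * Real.sqrt (∑ jk ∈ g, (M t jk.1 jk.2) ^ 2))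
        (if (j, k) ∈ g then
          lamg g * vg g * t0 / Real.sqrt (∑ jk ∈ g, (Bhat jk.1 jk.2) ^ 2) else 0) t0 := by
      intro g hg
      by_cases hmem : (j, k) ∈ g
      · rw [if_pos hmem]
        have hsq : 0 < ∑ jk ∈ g, (Bhat jk.1 jk.2) ^ 2 := by
          have := hgroups g hg hmem
          exact Real.sqrt_pos.mp this
        have hinner : HasDerivAt (fun t => ∑ jk ∈ g, (M t jk.1 jk.2) ^ 2)
            (2 * t0) t0 := by
          have hterm : ∀ jk : Fin p × Fin q, jk ∈ g → HasDerivAt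
              (fun t => (M t jk.1 jk.2) ^ 2)
              (if jk = (j, k) then 2 * t0 else 0) t0 := by
            intro jk _
            by_cases hj : jk = (j, k)
            · have hc : jk.1 = j ∧ jk.2 = k := by rw [hj]; exact ⟨rfl, rfl⟩
              simp only [hMdef, Matrix.of_apply, hc, and_self, if_true, hj]
              simpa using (hasDerivAt_id t0).fun_pow 2
            · have hc : ¬(jk.1 = j ∧ jk.2 = k) := by
                intro hcc
                exact hj (Prod.ext hcc.1 hcc.2)
              simp only [hMdef, Matrix.of_apply, hc, if_false, hj]
              exact hasDerivAt_const _ _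
          have := HasDerivAt.fun_sum hterm
          rwa [Finset.sum_ite_eq' g (j, k) (fun _ => 2 * t0), if_pos hmem] at this
        have hval : (∑ jk ∈ g, (M t0 jk.1 jk.2) ^ 2) = ∑ jk ∈ g, (Bhat jk.1 jk.2) ^ 2 := by
          rw [hMt0]
        have hs2 : HasDerivAt Real.sqrt
            (1 / (2 * Real.sqrt (∑ jk ∈ g, (Bhat jk.1 jk.2) ^ 2)))
            (∑ jk ∈ g, (M t0 jk.1 jk.2) ^ 2) := by
          rw [hval]; exact Real.hasDerivAt_sqrt hsq.ne'
        have hsqrt := hs2.comp t0 hinner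
        have := hsqrt.const_mul (lamg g * vg g)
        refine this.congr_deriv (Eq.symm ?_)
        have hs0 : Real.sqrt (∑ jk ∈ g, (Bhat jk.1 jk.2) ^ 2) ≠ 0 :=
          (hgroups g hg hmem).ne'
        field_simp
      · rw [if_neg hmem]
        have heq : (fun t => lamg g * vg g * Real.sqrt (∑ jk ∈ g, (M t jk.1 jk.2) ^ 2))
            = fun _ => lamg g * vg g * Real.sqrt (∑ jk ∈ g, (Bhat jk.1 jk.2) ^ 2) := by
          funext t
          congr 2
          refine Finset.sum_congr rfl fun jk hjkg => ?_
          have hc : ¬(jk.1 = j ∧ jk.2 = k) := by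
            intro hcc
            have hpe : jk = (j, k) := Prod.ext hcc.1 hcc.2
            exact hmem (hpe ▸ hjkg)
          simp [hMdef, hc]
        rw [heq]
        exact hasDerivAt_const _ _
    have hsum := HasDerivAt.fun_sum h1
    rwa [Finset.sum_ite, Finset.sum_const_zero, add_zero] at hsum
  -- total derivative and local minimum
  have hphi : HasDerivAt (fun t => L1 (M t))
      (-((1 / (n : ℝ)) * ∑ i, X i j * r i) + lam1 * w j * Real.sign t0
        + ∑ g ∈ 𝒢.filter (fun g => (j, k) ∈ g),
            lamg g * vg g * t0 / Real.sqrt (∑ jk ∈ g, (Bhat jk.1 jk.2) ^ 2)) t0 := by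
    have h := (hA.add hB).add hC
    have heq : (fun t => L1 (M t)) = fun t =>
        (1 / (2 * (n : ℝ))) * ∑ i, ∑ k', (Y i k' - ∑ j', X i j' * M t j' k') ^ 2
        + ∑ j', ∑ k', lam1 * w j' * |M t j' k'|
        + ∑ g ∈ 𝒢, lamg g * vg g * Real.sqrt (∑ jk ∈ g, (M t jk.1 jk.2) ^ 2) := by
      funext t
      rw [hL1]
    rw [heq]
    exact h
  have hlm : IsLocalMin (fun t => L1 (M t)) t0 :=
    Filter.Eventually.of_forall fun t => by
      simp only [hMt0]
      exact hmin (M t)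
  have hzero := hlm.hasDerivAt_eq_zero hphi
  -- split S
  have hSsplit : S Bhat j k = (∑ i, X i j * r i) + (∑ i, (X i j) ^ 2) * t0 := by
    rw [hS]
    rw [Finset.sum_mul]
    rw [← Finset.sum_add_distrib]
    refine Finset.sum_congr rfl fun i _ => ?_
    have h2 : (∑ j', X i j' * Bhat j' k)
        = (∑ j', if j' = j then 0 else X i j' * Bhat j' k) + X i j * Bhat j k := by
      have h3 : ∀ j' : Fin p, X i j' * Bhat j' k
          = (if j' = j then 0 else X i j' * Bhat j' k)
            + (if j' = j then X i j' * Bhat j' k else 0) := by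
        intro j'
        by_cases hj' : j' = j <;> simp [hj']
      calc (∑ j', X i j' * Bhat j' k)
          = ∑ j', ((if j' = j then 0 else X i j' * Bhat j' k)
              + (if j' = j then X i j' * Bhat j' k else 0)) :=
            Finset.sum_congr rfl fun j' _ => h3 j'
        _ = (∑ j', if j' = j then 0 else X i j' * Bhat j' k)
              + ∑ j', (if j' = j then X i j' * Bhat j' k else 0) :=
            Finset.sum_add_distrib
        _ = (∑ j', if j' = j then 0 else X i j' * Bhat j' k) + X i j * Bhat j k := by
            rw [Finset.sum_ite_eq' Finset.univ j (fun j' => X i j' * Bhat j' k)]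
            simp
    simp only [hr]
    rw [h2, ht0]
    ring
  rw [hSsplit]
  linear_combination (-1 : ℝ) * hzero
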